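/- For all natural numbers ℓ₁, ℓ₂ ≥ 1 with ℓ₁ ≤ ℓ₂ and ℓ = ℓ₁ + ℓ₂, we have ℓ₁·log₂(ℓ₁) + ℓ₂·log₂(ℓ₂) + 2·ℓ₁ ≤ ℓ·log₂(ℓ). -/
import Mathlib


open Real

lemma one_sub_inv_le_log (t : ℝ) (ht : 0 < t) : 1 - 1/t ≤ Real.log t := by
  have h := Real.log_le_sub_one_of_pos (inv_pos.mpr ht)
  rw [Real.log_inv] at h
  have : (t⁻¹ : ℝ) = 1/t := by ring
  linarith [h, this ▸ h]

lemma merge_log_key (A B : ℝ) (hA : 1 ≤ A) (hAB : A ≤ B) :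
    A * Real.log A + B * Real.log B + 2 * A * Real.log 2
      ≤ (A + B) * Real.log (A + B) := by
  have hA0 : 0 < A := by linarith
  have hB0 : 0 < B := by linarith
  have hn0 : 0 < A + B := by linarith
  have hlog2 : (0.6931471803 : ℝ) < Real.log 2 := Real.log_two_gt_d9
  rcases le_or_gt B (3 * A) with hcase | hcase
  · -- B ≤ 3A : tangent line bound at n/(2A) and n/(2B)
    set n := A + B with hn
    have e1 : Real.log (n / (2 * A)) = Real.log n - Real.log 2 - Real.log A := by
      rw [Real.log_div (by positivity) (by positivity),
        Real.log_mul (by norm_num) (ne_of_gt hA0)]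
      ring
    have e2 : Real.log (n / (2 * B)) = Real.log n - Real.log 2 - Real.log B := by
      rw [Real.log_div (by positivity) (by positivity),
        Real.log_mul (by norm_num) (ne_of_gt hB0)]
      ring
    have t1 : 1 - 1 / (n / (2 * A)) ≤ Real.log (n / (2 * A)) :=
      one_sub_inv_le_log _ (by positivity)
    have t2 : 1 - 1 / (n / (2 * B)) ≤ Real.log (n / (2 * B)) :=
      one_sub_inv_le_log _ (by positivity)
    have s1 : (1 : ℝ) / (n / (2 * A)) = 2 * A / n := by
      field_simp
    have s2 : (1 : ℝ) / (n / (2 * B)) = 2 * B / n := by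
      field_simp
    rw [e1, s1] at t1
    rw [e2, s2] at t2
    -- multiply t1 by A, t2 by B, combine
    have m1 : A * (1 - 2 * A / n) ≤ A * (Real.log n - Real.log 2 - Real.log A) :=
      mul_le_mul_of_nonneg_left t1 (le_of_lt hA0)
    have m2 : B * (1 - 2 * B / n) ≤ B * (Real.log n - Real.log 2 - Real.log B) :=
      mul_le_mul_of_nonneg_left t2 (le_of_lt hB0)
    have hAn : A * (2 * A / n) = 2 * A * A / n := by ring
    have hBn : B * (2 * B / n) = 2 * B * B / n := by ring
    -- need : (B - A) * (n * log 2 - (B - A)) ≥ 0, using B - A ≤ n/2 ≤ n*log2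
    have hba : 2 * (B - A) ≤ n := by simp only [hn]; linarith
    have h5 : (B - A) ≤ n * Real.log 2 := by nlinarith
    have hfin : 0 ≤ (B - A) * Real.log 2 - (B - A) * (B - A) / n := by
      rw [sub_nonneg, div_le_iff₀ hn0]
      nlinarith [mul_nonneg (sub_nonneg.mpr hAB) (sub_nonneg.mpr h5)]
    have key : A * (1 - 2 * A / n) + B * (1 - 2 * B / n) + (B - A) * Real.log 2 ≥ 0 := by
      have expand : A * (1 - 2 * A / n) + B * (1 - 2 * B / n)
          = (B - A) * (A - B) / n := by
        field_simp
        ring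
      rw [expand]
      have : (B - A) * (A - B) / n = -((B - A) * (B - A) / n) := by ring
      rw [this]
      linarith
    have sum0 : 0 ≤ A * (Real.log n - Real.log 2 - Real.log A)
        + B * (Real.log n - Real.log 2 - Real.log B) + (B - A) * Real.log 2 := by
      linarith [m1, m2, key]
    have hsplit : n * Real.log n = A * Real.log n + B * Real.log n := by
      rw [hn]; ring
    nlinarith [sum0, hsplit]
  · -- 3A < B : n ≥ 4A so log n ≥ log A + 2 log 2, and log n ≥ log B
    have h4 : 4 * A ≤ A + B := by linarith
    have l1 : Real.log A + 2 * Real.log 2 ≤ Real.log (A + B) := by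
      have : Real.log (4 * A) ≤ Real.log (A + B) :=
        Real.log_le_log (by positivity) h4
      rw [Real.log_mul (by norm_num) (ne_of_gt hA0)] at this
      have h4' : Real.log (4 : ℝ) = 2 * Real.log 2 := by
        rw [show (4 : ℝ) = 2 ^ 2 by norm_num, Real.log_pow]
        push_cast; ring
      linarith [h4' ▸ this]
    have l2 : Real.log B ≤ Real.log (A + B) :=
      Real.log_le_log hB0 (by linarith)
    nlinarith [mul_le_mul_of_nonneg_left l1 (le_of_lt hA0),
      mul_le_mul_of_nonneg_left l2 (le_of_lt hB0)]

/-- For naturals ℓ₁, ℓ₂ ≥ 1 with ℓ₁ ≤ ℓ₂ and ℓ = ℓ₁ + ℓ₂: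
ℓ₁·log₂ ℓ₁ + ℓ₂·log₂ ℓ₂ + 2·ℓ₁ ≤ ℓ·log₂ ℓ. -/
theorem merge_log_inequality (ℓ₁ ℓ₂ ℓ : ℕ) (h1 : 1 ≤ ℓ₁) (h12 : ℓ₁ ≤ ℓ₂)
    (hℓ : ℓ = ℓ₁ + ℓ₂) :
    (ℓ₁ : ℝ) * logb 2 (ℓ₁ : ℝ) + (ℓ₂ : ℝ) * logb 2 (ℓ₂ : ℝ) + 2 * (ℓ₁ : ℝ)
      ≤ (ℓ : ℝ) * logb 2 (ℓ : ℝ) := by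
  have hA : (1 : ℝ) ≤ (ℓ₁ : ℝ) := by exact_mod_cast h1
  have hAB : (ℓ₁ : ℝ) ≤ (ℓ₂ : ℝ) := by exact_mod_cast h12
  have hℓ' : (ℓ : ℝ) = (ℓ₁ : ℝ) + (ℓ₂ : ℝ) := by rw [hℓ]; push_cast; ring
  have key := merge_log_key (ℓ₁ : ℝ) (ℓ₂ : ℝ) hA hAB
  have hL : (0 : ℝ) < Real.log 2 := Real.log_pos (by norm_num)
  simp only [Real.logb, hℓ']
  have eq1 : (ℓ₁ : ℝ) * (Real.log ℓ₁ / Real.log 2) + (ℓ₂ : ℝ) * (Real.log ℓ₂ / Real.log 2)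
      + 2 * (ℓ₁ : ℝ)
      = ((ℓ₁ : ℝ) * Real.log ℓ₁ + (ℓ₂ : ℝ) * Real.log ℓ₂ + 2 * (ℓ₁ : ℝ) * Real.log 2)
        / Real.log 2 := by
    field_simp
  have eq2 : ((ℓ₁ : ℝ) + (ℓ₂ : ℝ)) * (Real.log ((ℓ₁ : ℝ) + (ℓ₂ : ℝ)) / Real.log 2)
      = (((ℓ₁ : ℝ) + (ℓ₂ : ℝ)) * Real.log ((ℓ₁ : ℝ) + (ℓ₂ : ℝ))) / Real.log 2 := by
    ring
  rw [eq1, eq2]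
  exact div_le_div_of_nonneg_right key hL.le |>.trans_eq rfl
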